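/- Let n ≥ 3 be an integer and k ∈ ℤ, and let V_k = { (x_1, …, x_n) ∈ ℤ^n : x_1 + ⋯ + x_n ∈ {k, k+1} }. Then the induced subgraph of the n-dimensional grid on V_k is n-regular and has girth exactly 6. -/

import Mathlib

/-- The `n`-dimensional grid: the unit-distance graph on `ℤ^n`. Two points are adjacent
iff they differ by exactly 1 in one coordinate and agree in all others, i.e. iff the sum
of the absolute coordinate differences is 1. -/
def grid (n : ℕ) : SimpleGraph (Fin n → ℤ) where
  Adj x y := ∑ i, |x i - y i| = 1
  symm := ⟨fun x y h => by
    rwa [Finset.sum_congr rfl fun i _ => abs_sub_comm (y i) (x i)]⟩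
  loopless := ⟨fun x h => by simp at h⟩

/-- The induced subgraph of the `n`-dimensional grid on `S` is `k`-regular:
every vertex has exactly `k` neighbours. -/
def IsRegularInduced (n : ℕ) (S : Set (Fin n → ℤ)) (k : ℕ) : Prop :=
  ∀ v : S, (((grid n).induce S).neighborSet v).ncard = k

def bump {n : ℕ} (i : Fin n) (ε : ℤ) : Fin n → ℤ := Pi.single i ε

lemma bump_apply {n : ℕ} (i j : Fin n) (ε : ℤ) : bump i ε j = if j = i then ε else 0 := by
  simp [bump, Pi.single_apply]

lemma grid_adj_iff {n : ℕ} {x y : Fin n → ℤ} :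
    (grid n).Adj x y ↔ ∃ i : Fin n, ∃ ε : ℤ, (ε = 1 ∨ ε = -1) ∧ y = x + bump i ε := by
  constructor
  · intro h
    change ∑ i, |x i - y i| = 1 at h
    have hne : ∃ i, x i ≠ y i := by
      by_contra hc
      push_neg at hc
      simp [hc] at h
    obtain ⟨i, hi⟩ := hne
    have h1 : 1 ≤ |x i - y i| := by
      have := abs_pos.mpr (sub_ne_zero.mpr hi)
      omega
    have hsum : |x i - y i| + ∑ j ∈ Finset.univ.erase i, |x j - y j| = 1 := by
      rw [← h]; exact Finset.add_sum_erase Finset.univ (fun j => |x j - y j|) (Finset.mem_univ i)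
    have hnn : 0 ≤ ∑ j ∈ Finset.univ.erase i, |x j - y j| :=
      Finset.sum_nonneg fun j _ => abs_nonneg _
    have hz : ∑ j ∈ Finset.univ.erase i, |x j - y j| = 0 := by linarith
    have habs : |x i - y i| = 1 := by linarith
    have hothers : ∀ j ∈ Finset.univ.erase i, |x j - y j| = 0 :=
      (Finset.sum_eq_zero_iff_of_nonneg fun j _ => abs_nonneg _).mp hz
    refine ⟨i, y i - x i, ?_, ?_⟩
    · rcases abs_eq (by norm_num : (0:ℤ) ≤ 1) |>.mp habs with h' | h' <;> omega
    · funext j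
      rw [Pi.add_apply, bump_apply]
      by_cases hj : j = i
      · subst hj; simp
      · have h0 := hothers j (Finset.mem_erase.mpr ⟨hj, Finset.mem_univ j⟩)
        have hxy : x j = y j := by
          have := abs_eq_zero.mp h0; omega
        simp [hj, hxy]
  · rintro ⟨i, ε, hε, rfl⟩
    change ∑ j, |x j - (x + bump i ε) j| = 1
    have key : ∀ j, |x j - (x + bump i ε) j| = if j = i then 1 else 0 := by
      intro j
      rw [Pi.add_apply, bump_apply]
      rcases hε with rfl | rfl <;> by_cases hj : j = i <;> simp [hj]
    rw [Finset.sum_congr rfl fun j _ => key j]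
    simp

lemma sum_bump {n : ℕ} (x : Fin n → ℤ) (i : Fin n) (ε : ℤ) :
    ∑ j, (x + bump i ε) j = (∑ j, x j) + ε := by
  have : ∀ j, (x + bump i ε) j = x j + (if j = i then ε else 0) := fun j => by
    rw [Pi.add_apply, bump_apply]
  rw [Finset.sum_congr rfl fun j _ => this j, Finset.sum_add_distrib]
  simp

def Slab (n : ℕ) (k : ℤ) : Set (Fin n → ℤ) := {x | (∑ i, x i) = k ∨ (∑ i, x i) = k + 1}

lemma induce_adj_iff {V : Type*} {G : SimpleGraph V} {s : Set V} {a b : ↥s} :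
    (G.induce s).Adj a b ↔ G.Adj ↑a ↑b := Iff.rfl

lemma slab_neighbor (n : ℕ) (k : ℤ) (v : ↥(Slab n k)) :
    (((grid n).induce (Slab n k)).neighborSet v).ncard = n := by
  -- pick the sign
  have hv : (∑ j, (v : Fin n → ℤ) j) = k ∨ (∑ j, (v : Fin n → ℤ) j) = k + 1 := v.2
  obtain ⟨σ, hσ, hmem, hnot⟩ :
      ∃ σ : ℤ, (σ = 1 ∨ σ = -1)
        ∧ ((∑ j, (v : Fin n → ℤ) j) + σ = k ∨ (∑ j, (v : Fin n → ℤ) j) + σ = k + 1)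
        ∧ ¬ ((∑ j, (v : Fin n → ℤ) j) + -σ = k ∨ (∑ j, (v : Fin n → ℤ) j) + -σ = k + 1) := by
    rcases hv with h | h
    · exact ⟨1, Or.inl rfl, Or.inr (by omega), by omega⟩
    · exact ⟨-1, Or.inr rfl, Or.inl (by omega), by omega⟩
  have hmem' : ∀ i : Fin n, ((v : Fin n → ℤ) + bump i σ) ∈ Slab n k := by
    intro i
    show _ = k ∨ _ = k + 1
    rw [sum_bump]
    exact hmem
  set f : Fin n → ↥(Slab n k) := fun i => ⟨(v : Fin n → ℤ) + bump i σ, hmem' i⟩ with hf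
  have hinj : Function.Injective f := by
    intro i i' h
    have h2 : (v : Fin n → ℤ) + bump i σ = (v : Fin n → ℤ) + bump i' σ := congrArg Subtype.val h
    have h3 : bump i σ = bump i' σ := by
      funext t; have := congrFun h2 t; simpa using this
    have h4 := congrFun h3 i
    rw [bump_apply, bump_apply, if_pos rfl] at h4
    by_contra hne
    rw [if_neg (fun h => hne h)] at h4
    omega
  have hset : (((grid n).induce (Slab n k)).neighborSet v) = Set.range f := by
    ext w
    simp only [SimpleGraph.mem_neighborSet, Set.mem_range]
    constructor
    · intro hadj
      rw [induce_adj_iff, grid_adj_iff] at hadj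
      obtain ⟨i, ε, hε, hw⟩ := hadj
      have hsum : (∑ j, (w : Fin n → ℤ) j) = (∑ j, (v : Fin n → ℤ) j) + ε := by
        rw [hw, sum_bump]
      have hεσ : ε = σ := by
        by_contra hne
        have : ε = -σ := by rcases hε with rfl | rfl <;> rcases hσ with rfl | rfl <;> omega
        apply hnot
        have hw2 : (∑ j, (w : Fin n → ℤ) j) = k ∨ (∑ j, (w : Fin n → ℤ) j) = k + 1 := w.2
        omega
      refine ⟨i, ?_⟩
      apply Subtype.ext
      rw [hw, hεσ]
    · rintro ⟨i, rfl⟩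
      rw [induce_adj_iff, grid_adj_iff]
      exact ⟨i, σ, hσ, rfl⟩
  rw [hset, ← Nat.card_coe_set_eq, Nat.card_range_of_injective hinj, Nat.card_eq_fintype_card,
    Fintype.card_fin]

lemma walk_parity {n : ℕ} {S : Set (Fin n → ℤ)} {a b : ↥S}
    (w : ((grid n).induce S).Walk a b) :
    (w.length : ℤ) % 2 = ((∑ j, (b : Fin n → ℤ) j) - (∑ j, (a : Fin n → ℤ) j)) % 2 := by
  induction w with
  | nil => simp
  | cons h p ih =>
    rename_i u c d
    rw [induce_adj_iff, grid_adj_iff] at h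
    obtain ⟨i, ε, hε, hc⟩ := h
    have hsum : (∑ j, (c : Fin n → ℤ) j) = (∑ j, (u : Fin n → ℤ) j) + ε := by
      rw [hc, sum_bump]
    rw [SimpleGraph.Walk.length_cons]
    push_cast
    omega

lemma no_four_cycle {n : ℕ} {k : ℤ} (a : ↥(Slab n k))
    (w : ((grid n).induce (Slab n k)).Walk a a) (hcyc : w.IsCycle) (hl : w.length = 4) :
    False := by
  cases w with
  | nil => simp at hl
  | cons h1 p =>
    rename_i b
    cases p with
    | nil => simp at hl
    | cons h2 p =>
      rename_i c
      cases p with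
      | nil => simp at hl
      | cons h3 p =>
        rename_i d
        cases p with
        | nil => simp at hl
        | cons h4 p =>
          rename_i e
          cases p with
          | cons h5 p => simp [SimpleGraph.Walk.length_cons] at hl
          | nil =>
            -- h1 : Adj a b, h2 : Adj b c, h3 : Adj c d, h4 : Adj d a (e = a)
            rw [SimpleGraph.Walk.isCycle_def] at hcyc
            obtain ⟨htrail, hnil, hnodup⟩ := hcyc
            simp only [SimpleGraph.Walk.support_cons, SimpleGraph.Walk.support_nil,
              List.tail_cons, List.nodup_cons, List.mem_cons, List.mem_singleton,
              List.not_mem_nil, or_false, List.nodup_nil, and_true] at hnodup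
            push_neg at hnodup
            obtain ⟨⟨hbc, hbd, hba⟩, ⟨hcd, hca⟩, hda⟩ := hnodup
            rw [induce_adj_iff, grid_adj_iff] at h1 h2 h3 h4
            obtain ⟨i1, ε1, hε1, he1⟩ := h1
            obtain ⟨i2, ε2, hε2, he2⟩ := h2
            obtain ⟨i3, ε3, hε3, he3⟩ := h3
            obtain ⟨i4, ε4, hε4, he4⟩ := h4
            -- sums
            have ha2 : (∑ j, (a : Fin n → ℤ) j) = k ∨ (∑ j, (a : Fin n → ℤ) j) = k + 1 := a.2
            have hb2 : (∑ j, (b : Fin n → ℤ) j) = k ∨ (∑ j, (b : Fin n → ℤ) j) = k + 1 := b.2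
            have hc2 : (∑ j, (c : Fin n → ℤ) j) = k ∨ (∑ j, (c : Fin n → ℤ) j) = k + 1 := c.2
            have hd2 : (∑ j, (d : Fin n → ℤ) j) = k ∨ (∑ j, (d : Fin n → ℤ) j) = k + 1 := d.2
            have hs1 : (∑ j, (b : Fin n → ℤ) j) = (∑ j, (a : Fin n → ℤ) j) + ε1 := by
              rw [he1, sum_bump]
            have hs2 : (∑ j, (c : Fin n → ℤ) j) = (∑ j, (b : Fin n → ℤ) j) + ε2 := by
              rw [he2, sum_bump]
            have hs3 : (∑ j, (d : Fin n → ℤ) j) = (∑ j, (c : Fin n → ℤ) j) + ε3 := by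
              rw [he3, sum_bump]
            obtain ⟨hflip2, hflip3, hflip4⟩ : ε2 = -ε1 ∧ ε3 = -ε2 ∧ ε4 = -ε3 := by
              have hs4 : (∑ j, (a : Fin n → ℤ) j) = (∑ j, (d : Fin n → ℤ) j) + ε4 := by
                rw [he4, sum_bump]
              generalize (∑ j, (a : Fin n → ℤ) j) = Sa at ha2 hs1 hs4
              generalize (∑ j, (b : Fin n → ℤ) j) = Sb at hb2 hs1 hs2
              generalize (∑ j, (c : Fin n → ℤ) j) = Sc at hc2 hs2 hs3
              generalize (∑ j, (d : Fin n → ℤ) j) = Sd at hd2 hs3 hs4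
              omega
            -- i1 ≠ i2 from a ≠ c
            have hca' : (c : Fin n → ℤ) ≠ (a : Fin n → ℤ) :=
              fun h => hca (Subtype.ext h)
            have h12 : i1 ≠ i2 := by
              rintro rfl
              apply hca'
              rw [he2, he1]
              funext t
              simp only [Pi.add_apply, bump_apply]
              by_cases ht : t = i1 <;> simp [ht] <;> omega
            -- closing equation
            have hclose : (a : Fin n → ℤ) = (((a : Fin n → ℤ) + bump i1 ε1) + bump i2 ε2)
                + bump i3 ε3 + bump i4 ε4 := by
              rw [← he1, ← he2, ← he3, ← he4]
            by_cases h32 : i3 = i2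
            · -- then d = b
              apply hbd
              apply Subtype.ext
              symm
              rw [he3, he2, h32]
              funext t
              simp only [Pi.add_apply, bump_apply]
              by_cases ht : t = i2 <;> simp [ht] <;> omega
            · have hev := congrFun hclose i2
              simp only [Pi.add_apply, bump_apply, if_pos rfl, if_true,
                if_neg (fun h : (i2 : Fin n) = i1 => h12 h.symm),
                if_neg (fun h : (i2 : Fin n) = i3 => h32 h.symm)] at hev
              by_cases h42 : i2 = i4
              · rw [if_pos h42] at hev
                rcases hε2 with rfl | rfl <;> linarith
              · rw [if_neg h42] at hev
                rcases hε2 with rfl | rfl <;> linarith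

lemma six_cycle (n : ℕ) (k : ℤ) (hn : 3 ≤ n) :
    ∃ (a : ↥(Slab n k)) (w : ((grid n).induce (Slab n k)).Walk a a),
      w.IsCycle ∧ w.length = 6 := by
  have h0 : 0 < n := by omega
  have h1 : 1 < n := by omega
  have h2 : 2 < n := by omega
  obtain ⟨i0, hi0⟩ : ∃ i : Fin n, (i : ℕ) = 0 := ⟨⟨0, h0⟩, rfl⟩
  obtain ⟨i1, hi1⟩ : ∃ i : Fin n, (i : ℕ) = 1 := ⟨⟨1, h1⟩, rfl⟩
  obtain ⟨i2, hi2⟩ : ∃ i : Fin n, (i : ℕ) = 2 := ⟨⟨2, h2⟩, rfl⟩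
  have d01 : i0 ≠ i1 := fun h => by rw [Fin.ext_iff, hi0, hi1] at h; omega
  have d10 : i1 ≠ i0 := fun h => d01 h.symm
  have d02 : i0 ≠ i2 := fun h => by rw [Fin.ext_iff, hi0, hi2] at h; omega
  have d20 : i2 ≠ i0 := fun h => d02 h.symm
  have d12 : i1 ≠ i2 := fun h => by rw [Fin.ext_iff, hi1, hi2] at h; omega
  have d21 : i2 ≠ i1 := fun h => d12 h.symm
  obtain ⟨u0, hu0⟩ : ∃ u : Fin n → ℤ, u = bump i0 k := ⟨_, rfl⟩
  obtain ⟨u1, hu1⟩ : ∃ u : Fin n → ℤ, u = u0 + bump i0 1 := ⟨_, rfl⟩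
  obtain ⟨u2, hu2⟩ : ∃ u : Fin n → ℤ, u = u1 + bump i1 (-1) := ⟨_, rfl⟩
  obtain ⟨u3, hu3⟩ : ∃ u : Fin n → ℤ, u = u2 + bump i2 1 := ⟨_, rfl⟩
  obtain ⟨u4, hu4⟩ : ∃ u : Fin n → ℤ, u = u3 + bump i0 (-1) := ⟨_, rfl⟩
  obtain ⟨u5, hu5⟩ : ∃ u : Fin n → ℤ, u = u4 + bump i1 1 := ⟨_, rfl⟩
  have hs0 : ∑ j, u0 j = k := by rw [hu0]; exact Fintype.sum_pi_single' i0 k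
  have hs1 : ∑ j, u1 j = k + 1 := by rw [hu1, sum_bump, hs0]
  have hs2 : ∑ j, u2 j = k := by rw [hu2, sum_bump, hs1]; ring
  have hs3 : ∑ j, u3 j = k + 1 := by rw [hu3, sum_bump, hs2]
  have hs4 : ∑ j, u4 j = k := by rw [hu4, sum_bump, hs3]; ring
  have hs5 : ∑ j, u5 j = k + 1 := by rw [hu5, sum_bump, hs4]
  -- coordinate values
  have val : ∀ t : Fin n, u0 t = (if t = i0 then k else 0)
      ∧ u1 t = (if t = i0 then k + 1 else 0)
      ∧ u2 t = (if t = i0 then k + 1 else if t = i1 then -1 else 0)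
      ∧ u3 t = (if t = i0 then k + 1 else if t = i1 then -1 else if t = i2 then 1 else 0)
      ∧ u4 t = (if t = i0 then k else if t = i1 then -1 else if t = i2 then 1 else 0)
      ∧ u5 t = (if t = i0 then k else if t = i2 then 1 else 0) := by
    intro t
    rw [hu5, hu4, hu3, hu2, hu1, hu0]
    simp only [Pi.add_apply, bump_apply]
    by_cases t0 : t = i0
    · subst t0
      simp only [if_pos rfl, if_neg d01, if_neg d02, if_true]
      refine ⟨?_, ?_, ?_, ?_, ?_, ?_⟩ <;> first | exact trivial | ring
    · by_cases t1 : t = i1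
      · subst t1
        simp only [if_pos rfl, if_neg d10, if_neg d12, if_neg t0, if_true]
        refine ⟨?_, ?_, ?_, ?_, ?_, ?_⟩ <;> first | exact trivial | ring
      · by_cases t2 : t = i2
        · subst t2
          simp only [if_pos rfl, if_neg d20, if_neg d21, if_neg t0, if_neg t1, if_true]
          refine ⟨?_, ?_, ?_, ?_, ?_, ?_⟩ <;> first | exact trivial | ring
        · simp only [if_neg t0, if_neg t1, if_neg t2]
          refine ⟨?_, ?_, ?_, ?_, ?_, ?_⟩ <;> first | exact trivial | ring
  have hclose : u0 = u5 + bump i2 (-1) := by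
    funext t
    rw [Pi.add_apply, (val t).1, (val t).2.2.2.2.2, bump_apply]
    by_cases t0 : t = i0
    · subst t0; simp only [if_pos rfl, if_neg d02, if_true]; ring
    · by_cases t2 : t = i2
      · subst t2; simp only [if_pos rfl, if_neg t0, if_true]; ring
      · simp only [if_neg t0, if_neg t2]; ring
  -- pairwise inequalities
  have q01 : u0 ≠ u1 := fun h => by
    have := congrFun h i0
    rw [(val i0).1, (val i0).2.1] at this
    simp at this
  have q02 : u0 ≠ u2 := fun h => by
    have := congrFun h i1
    rw [(val i1).1, (val i1).2.2.1] at this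
    simp [d10] at this
  have q03 : u0 ≠ u3 := fun h => by
    have := congrFun h i2
    rw [(val i2).1, (val i2).2.2.2.1] at this
    simp [d20, d21] at this
  have q04 : u0 ≠ u4 := fun h => by
    have := congrFun h i1
    rw [(val i1).1, (val i1).2.2.2.2.1] at this
    simp [d10, d12] at this
  have q05 : u0 ≠ u5 := fun h => by
    have := congrFun h i2
    rw [(val i2).1, (val i2).2.2.2.2.2] at this
    simp [d20] at this
  have q12 : u1 ≠ u2 := fun h => by
    have := congrFun h i1
    rw [(val i1).2.1, (val i1).2.2.1] at this
    simp [d10] at this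
  have q13 : u1 ≠ u3 := fun h => by
    have := congrFun h i2
    rw [(val i2).2.1, (val i2).2.2.2.1] at this
    simp [d20, d21] at this
  have q14 : u1 ≠ u4 := fun h => by
    have := congrFun h i0
    rw [(val i0).2.1, (val i0).2.2.2.2.1] at this
    simp at this
  have q15 : u1 ≠ u5 := fun h => by
    have := congrFun h i0
    rw [(val i0).2.1, (val i0).2.2.2.2.2] at this
    simp at this
  have q23 : u2 ≠ u3 := fun h => by
    have := congrFun h i2
    rw [(val i2).2.2.1, (val i2).2.2.2.1] at this
    simp [d20, d21] at this
  have q24 : u2 ≠ u4 := fun h => by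
    have := congrFun h i0
    rw [(val i0).2.2.1, (val i0).2.2.2.2.1] at this
    simp at this
  have q25 : u2 ≠ u5 := fun h => by
    have := congrFun h i1
    rw [(val i1).2.2.1, (val i1).2.2.2.2.2] at this
    simp [d10, d12] at this
  have q34 : u3 ≠ u4 := fun h => by
    have := congrFun h i0
    rw [(val i0).2.2.2.1, (val i0).2.2.2.2.1] at this
    simp at this
  have q35 : u3 ≠ u5 := fun h => by
    have := congrFun h i1
    rw [(val i1).2.2.2.1, (val i1).2.2.2.2.2] at this
    simp [d10, d12] at this
  have q45 : u4 ≠ u5 := fun h => by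
    have := congrFun h i1
    rw [(val i1).2.2.2.2.1, (val i1).2.2.2.2.2] at this
    simp [d10, d12] at this
  -- subtype vertices
  refine ⟨⟨u0, Or.inl hs0⟩, ?_⟩
  have a01 : ((grid n).induce (Slab n k)).Adj ⟨u0, Or.inl hs0⟩ ⟨u1, Or.inr hs1⟩ := by
    rw [induce_adj_iff, grid_adj_iff]; exact ⟨i0, 1, Or.inl rfl, hu1⟩
  have a12 : ((grid n).induce (Slab n k)).Adj ⟨u1, Or.inr hs1⟩ ⟨u2, Or.inl hs2⟩ := by
    rw [induce_adj_iff, grid_adj_iff]; exact ⟨i1, -1, Or.inr rfl, hu2⟩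
  have a23 : ((grid n).induce (Slab n k)).Adj ⟨u2, Or.inl hs2⟩ ⟨u3, Or.inr hs3⟩ := by
    rw [induce_adj_iff, grid_adj_iff]; exact ⟨i2, 1, Or.inl rfl, hu3⟩
  have a34 : ((grid n).induce (Slab n k)).Adj ⟨u3, Or.inr hs3⟩ ⟨u4, Or.inl hs4⟩ := by
    rw [induce_adj_iff, grid_adj_iff]; exact ⟨i0, -1, Or.inr rfl, hu4⟩
  have a45 : ((grid n).induce (Slab n k)).Adj ⟨u4, Or.inl hs4⟩ ⟨u5, Or.inr hs5⟩ := by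
    rw [induce_adj_iff, grid_adj_iff]; exact ⟨i1, 1, Or.inl rfl, hu5⟩
  have a50 : ((grid n).induce (Slab n k)).Adj ⟨u5, Or.inr hs5⟩ ⟨u0, Or.inl hs0⟩ := by
    rw [induce_adj_iff, grid_adj_iff]; exact ⟨i2, -1, Or.inr rfl, hclose⟩
  have e01 : (⟨u0, Or.inl hs0⟩ : ↥(Slab n k)) ≠ ⟨u1, Or.inr hs1⟩ := fun h => q01 (congrArg Subtype.val h)
  have e02 : (⟨u0, Or.inl hs0⟩ : ↥(Slab n k)) ≠ ⟨u2, Or.inl hs2⟩ := fun h => q02 (congrArg Subtype.val h)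
  have e03 : (⟨u0, Or.inl hs0⟩ : ↥(Slab n k)) ≠ ⟨u3, Or.inr hs3⟩ := fun h => q03 (congrArg Subtype.val h)
  have e04 : (⟨u0, Or.inl hs0⟩ : ↥(Slab n k)) ≠ ⟨u4, Or.inl hs4⟩ := fun h => q04 (congrArg Subtype.val h)
  have e05 : (⟨u0, Or.inl hs0⟩ : ↥(Slab n k)) ≠ ⟨u5, Or.inr hs5⟩ := fun h => q05 (congrArg Subtype.val h)
  have e12 : (⟨u1, Or.inr hs1⟩ : ↥(Slab n k)) ≠ ⟨u2, Or.inl hs2⟩ := fun h => q12 (congrArg Subtype.val h)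
  have e13 : (⟨u1, Or.inr hs1⟩ : ↥(Slab n k)) ≠ ⟨u3, Or.inr hs3⟩ := fun h => q13 (congrArg Subtype.val h)
  have e14 : (⟨u1, Or.inr hs1⟩ : ↥(Slab n k)) ≠ ⟨u4, Or.inl hs4⟩ := fun h => q14 (congrArg Subtype.val h)
  have e15 : (⟨u1, Or.inr hs1⟩ : ↥(Slab n k)) ≠ ⟨u5, Or.inr hs5⟩ := fun h => q15 (congrArg Subtype.val h)
  have e23 : (⟨u2, Or.inl hs2⟩ : ↥(Slab n k)) ≠ ⟨u3, Or.inr hs3⟩ := fun h => q23 (congrArg Subtype.val h)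
  have e24 : (⟨u2, Or.inl hs2⟩ : ↥(Slab n k)) ≠ ⟨u4, Or.inl hs4⟩ := fun h => q24 (congrArg Subtype.val h)
  have e25 : (⟨u2, Or.inl hs2⟩ : ↥(Slab n k)) ≠ ⟨u5, Or.inr hs5⟩ := fun h => q25 (congrArg Subtype.val h)
  have e34 : (⟨u3, Or.inr hs3⟩ : ↥(Slab n k)) ≠ ⟨u4, Or.inl hs4⟩ := fun h => q34 (congrArg Subtype.val h)
  have e35 : (⟨u3, Or.inr hs3⟩ : ↥(Slab n k)) ≠ ⟨u5, Or.inr hs5⟩ := fun h => q35 (congrArg Subtype.val h)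
  have e45 : (⟨u4, Or.inl hs4⟩ : ↥(Slab n k)) ≠ ⟨u5, Or.inr hs5⟩ := fun h => q45 (congrArg Subtype.val h)
  refine ⟨SimpleGraph.Walk.cons a01 (SimpleGraph.Walk.cons a12 (SimpleGraph.Walk.cons a23
    (SimpleGraph.Walk.cons a34 (SimpleGraph.Walk.cons a45
      (SimpleGraph.Walk.cons a50 SimpleGraph.Walk.nil))))), ?_, by simp⟩
  rw [SimpleGraph.Walk.cons_isCycle_iff]
  constructor
  · rw [SimpleGraph.Walk.isPath_def]
    simp only [SimpleGraph.Walk.support_cons, SimpleGraph.Walk.support_nil,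
      List.nodup_cons, List.mem_cons, List.not_mem_nil, List.mem_singleton, or_false,
      List.nodup_nil, and_true]
    push_neg
    exact ⟨⟨e12, e13, e14, e15, fun h => e01 h.symm⟩, ⟨e23, e24, e25, fun h => e02 h.symm⟩,
      ⟨e34, e35, fun h => e03 h.symm⟩, ⟨e45, fun h => e04 h.symm⟩,
      ⟨fun h => e05 h.symm, trivial⟩⟩
  · intro hmem
    simp only [SimpleGraph.Walk.edges_cons, SimpleGraph.Walk.edges_nil,
      List.mem_cons, List.not_mem_nil, or_false] at hmem
    rcases hmem with h | h | h | h | h <;> rw [Sym2.eq_iff] at h <;>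
      rcases h with ⟨h1, h2⟩ | ⟨h1, h2⟩
    · exact e01 h1
    · exact e02 h1
    · exact e02 h1
    · exact e03 h1
    · exact e03 h1
    · exact e04 h1
    · exact e04 h1
    · exact e05 h1
    · exact e05 h1
    · exact e15 h2

theorem slab_regular_girth_six (n : ℕ) (hn : 3 ≤ n) (k : ℤ)
    (S : Set (Fin n → ℤ))
    (hS : S = {x | (∑ i, x i) = k ∨ (∑ i, x i) = k + 1}) :
    IsRegularInduced n S n ∧ ((grid n).induce S).egirth = 6 := by
  have hS' : S = Slab n k := hS
  subst hS'
  constructor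
  · intro v
    exact slab_neighbor n k v
  · apply le_antisymm
    · obtain ⟨a, w, hc, hl⟩ := six_cycle n k hn
      have h : ((grid n).induce (Slab n k)).egirth ≤ (w.length : ℕ∞) := by
        simp only [SimpleGraph.egirth]
        exact iInf₂_le_of_le a w (iInf_le _ hc)
      rw [hl] at h
      exact_mod_cast h
    · rw [SimpleGraph.le_egirth]
      intro a w hw
      have hpar := walk_parity w
      simp only [sub_self] at hpar
      have h4 : w.length ≠ 4 := fun hl => no_four_cycle a w hw hl
      have h3 : 3 ≤ w.length := hw.three_le_length
      have h6 : 6 ≤ w.length := by omega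
      exact_mod_cast h6
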